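/- For r ≥ 3 there exists ε_r > 0 such that for every p ∈ (1/2 − ε_r, 1/2) there exists C(p) > 0 with |C_0^{d,p}| / e^{C(p)d} → +∞ in probability as d → ∞; one may take C(p) = (log r − K(p))/2 with K(p) = −log(4p(1−p)). -/

import Mathlib

open MeasureTheory ProbabilityTheory

/-- `x` and `y` are neighbors on the torus `T^d(r) = (ZMod r)^d` iff they differ
by `±1 (mod r)` in exactly one coordinate. -/
def torusAdj (d r : ℕ) (x y : Fin d → ZMod r) : Prop :=
  ∃ i : Fin d, y = Function.update x i (x i + 1) ∨ y = Function.update x i (x i - 1)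

/-- The product Bernoulli(p) measure on configurations of `T^d(r)`. -/
noncomputable def bernoulliField (d r : ℕ) (hr : NeZero r) (p : ℝ) (hp : p ≤ 1) :
    Measure ((Fin d → ZMod r) → Bool) :=
  haveI := hr
  Measure.pi fun _ => (PMF.bernoulli (Real.toNNReal p) (Real.toNNReal_le_one.mpr hp)).toMeasure

open Finset

section nb
variable {d r : ℕ} [NeZero r]

lemma dvd_lemma {k : ℕ} (hr : 3 ≤ r) (hk : 0 < k) (hk2 : k < 3) (h : ((k : ℕ) : ZMod r) = 0) :
    False := by
  rw [ZMod.natCast_eq_zero_iff] at h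
  exact absurd (Nat.le_of_dvd hk h) (by omega)

lemma two_ne_zero_zmod (hr : 3 ≤ r) : (1 : ZMod r) ≠ -1 := fun h =>
  dvd_lemma (k := 2) hr (by norm_num) (by norm_num) (by push_cast; linear_combination h)

lemma one_ne_zero_zmod (hr : 3 ≤ r) : (1 : ZMod r) ≠ 0 := fun h =>
  dvd_lemma (k := 1) hr (by norm_num) (by norm_num) (by push_cast; exact h)

/-- the neighbor map -/
noncomputable def nbr (x : Fin d → ZMod r) (ib : Fin d × Bool) : Fin d → ZMod r :=
  Function.update x ib.1 (x ib.1 + if ib.2 then 1 else -1)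

lemma pm_ne_zero (hr : 3 ≤ r) (b : Bool) : (if b then (1:ZMod r) else -1) ≠ 0 := by
  cases b
  · simp only [if_neg Bool.false_ne_true]
    intro hc; exact one_ne_zero_zmod hr (by linear_combination -hc)
  · simp only [if_pos rfl]; exact one_ne_zero_zmod hr

lemma nbr_inj (hr : 3 ≤ r) (x : Fin d → ZMod r) : Function.Injective (nbr x) := by
  rintro ⟨i, b⟩ ⟨j, c⟩ h
  have hij : i = j := by
    by_contra hne
    have h1 := congrFun h i
    simp [nbr, Function.update_apply, hne, Ne.symm hne] at h1
    exact pm_ne_zero hr b (by linear_combination h1)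
  subst hij
  have h1 := congrFun h i
  simp [nbr] at h1
  have hbc : (if b then (1:ZMod r) else -1) = (if c then (1:ZMod r) else -1) := by
    linear_combination h1
  have : b = c := by
    cases b <;> cases c
    · rfl
    · simp only [if_true, if_false] at hbc; exact absurd hbc.symm (two_ne_zero_zmod hr)
    · simp only [if_true, if_false] at hbc; exact absurd hbc (two_ne_zero_zmod hr)
    · rfl
  simp [this]

omit [NeZero r] in
lemma nbhd_eq_range (x : Fin d → ZMod r) :
    {y | torusAdj d r x y} = Set.range (nbr x) := by
  ext y
  constructor
  · rintro ⟨i, h | h⟩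
    · exact ⟨(i, true), by simp [nbr, h]⟩
    · exact ⟨(i, false), by simp [nbr, h, sub_eq_add_neg]⟩
  · rintro ⟨⟨i, b⟩, rfl⟩
    cases b
    · exact ⟨i, Or.inr (by simp [nbr, sub_eq_add_neg])⟩
    · exact ⟨i, Or.inl (by simp [nbr])⟩

lemma ncard_nbhd (hr : 3 ≤ r) (x : Fin d → ZMod r) :
    Set.ncard {y | torusAdj d r x y} = 2 * d := by
  rw [nbhd_eq_range, ← Set.image_univ, Set.ncard_image_of_injective _ (nbr_inj hr x),
    Set.ncard_univ]
  simp only [Nat.card_eq_fintype_card, Fintype.card_prod, Fintype.card_fin, Fintype.card_bool]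
  ring

omit [NeZero r] in
lemma adj_hammingDist {x y : Fin d → ZMod r} (h : torusAdj d r x y) :
    hammingDist x y ≤ 1 := by
  obtain ⟨i, h | h⟩ := h <;> subst h <;>
  · refine le_trans (Finset.card_le_card ?_) (Finset.card_singleton i).le
    intro k hk
    simp only [hammingDist, Finset.mem_filter] at hk
    simp only [Finset.mem_singleton]
    by_contra hne
    exact hk.2 (by simp [Function.update_apply, hne])
end nb

section code

variable {d r : ℕ} [NeZero r]

lemma ball2_card (hd : 1 ≤ d) (x : Fin d → ZMod r) :
    (univ.filter fun z : Fin d → ZMod r => hammingDist x z ≤ 2).card ≤ (d * r)^2 := by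
  classical
  set F : (Fin d × ZMod r) × (Fin d × ZMod r) → (Fin d → ZMod r) :=
    fun w => Function.update (Function.update x w.1.1 w.1.2) w.2.1 w.2.2 with hF
  have hsub : (univ.filter fun z : Fin d → ZMod r => hammingDist x z ≤ 2) ⊆
      Finset.image F univ := by
    intro z hz
    simp only [mem_filter, mem_univ, true_and] at hz
    set D := univ.filter fun k => x k ≠ z k with hD
    have hcard : D.card ≤ 2 := hz
    have hij : ∃ i j : Fin d, ∀ k, k ≠ i → k ≠ j → x k = z k := by
      have i0 : Fin d := ⟨0, hd⟩
      have key : ∀ k, k ∉ D → x k = z k := by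
        intro k hk
        simp only [hD, mem_filter, mem_univ, true_and, not_not] at hk
        exact hk
      interval_cases h : D.card
      · exact ⟨i0, i0, fun k _ _ => key k (by simp [Finset.card_eq_zero.mp h])⟩
      · obtain ⟨a, ha⟩ := Finset.card_eq_one.mp h
        exact ⟨a, a, fun k hk _ => key k (by simp [ha, hk])⟩
      · obtain ⟨a, b, _, hab⟩ := Finset.card_eq_two.mp h
        exact ⟨a, b, fun k hk1 hk2 => key k (by simp [hab, hk1, hk2])⟩
    obtain ⟨i, j, hij⟩ := hij
    refine Finset.mem_image.mpr ⟨((i, z i), (j, z j)), mem_univ _, ?_⟩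
    funext k
    simp only [hF, Function.update_apply]
    by_cases hkj : k = j
    · simp [hkj]
    · by_cases hki : k = i
      · simp [hki, hkj, hki ▸ hkj]
      · simp [hki, hkj, (hij k hki hkj).symm]
  calc (univ.filter fun z : Fin d → ZMod r => hammingDist x z ≤ 2).card
      ≤ (Finset.image F univ).card := Finset.card_le_card hsub
    _ ≤ (univ : Finset ((Fin d × ZMod r) × (Fin d × ZMod r))).card := Finset.card_image_le
    _ = (d * r)^2 := by simp [ZMod.card]; ring

lemma exists_code (hd : 1 ≤ d) :
    ∃ S : Finset (Fin d → ZMod r),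
      (∀ x ∈ S, ∀ y ∈ S, x ≠ y → 3 ≤ hammingDist x y) ∧
      r ^ d ≤ S.card * (d * r)^2 := by
  classical
  set P : Finset (Fin d → ZMod r) → Prop :=
    fun S => ∀ x ∈ S, ∀ y ∈ S, x ≠ y → 3 ≤ hammingDist x y with hP
  have hne : (univ.powerset.filter P).Nonempty :=
    ⟨∅, by simp [hP]⟩
  obtain ⟨S, hS, hmax⟩ := Finset.exists_max_image (univ.powerset.filter P) Finset.card hne
  simp only [mem_filter, mem_powerset] at hS
  refine ⟨S, hS.2, ?_⟩
  have hcover : ∀ z : Fin d → ZMod r, ∃ x ∈ S, hammingDist x z ≤ 2 := by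
    intro z
    by_contra hcon
    push_neg at hcon
    have hzS : z ∉ S := fun h => by simpa using hcon z h
    have hPz : P (insert z S) := by
      intro a ha b hb hab
      by_cases haz : a = z
      · subst haz
        rw [hammingDist_comm]
        exact hcon b ((Finset.mem_insert.mp hb).resolve_left (by rintro rfl; exact hab rfl))
      · by_cases hbz : b = z
        · subst hbz
          exact hcon a ((Finset.mem_insert.mp ha).resolve_left haz)
        · exact hS.2 a ((Finset.mem_insert.mp ha).resolve_left haz)
            b ((Finset.mem_insert.mp hb).resolve_left hbz) hab
    have := hmax (insert z S)
      (Finset.mem_filter.mpr ⟨Finset.mem_powerset.mpr (by simp), hPz⟩)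
    rw [Finset.card_insert_of_notMem hzS] at this
    omega
  calc r ^ d = (univ : Finset (Fin d → ZMod r)).card := by
        simp [ZMod.card]
    _ ≤ (S.biUnion fun x => univ.filter
          fun z : Fin d → ZMod r => hammingDist x z ≤ 2).card := by
        apply Finset.card_le_card
        intro z _
        obtain ⟨x, hx, hxz⟩ := hcover z
        exact Finset.mem_biUnion.mpr ⟨x, hx, by simp [hxz]⟩
    _ ≤ ∑ x ∈ S, (univ.filter fun z : Fin d → ZMod r => hammingDist x z ≤ 2).card :=
        Finset.card_biUnion_le
    _ ≤ ∑ _x ∈ S, (d * r)^2 := Finset.sum_le_sum fun x _ => ball2_card hd x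
    _ = S.card * (d * r)^2 := by rw [Finset.sum_const, smul_eq_mul]
end code

section meas
variable {d r : ℕ} [inst : NeZero r] {p : ℝ}

lemma meas_all (s : Set ((Fin d → ZMod r) → Bool)) : MeasurableSet s :=
  s.toFinite.measurableSet

noncomputable def berM (p : ℝ) (hp : p ≤ 1) : Measure Bool :=
  (PMF.bernoulli (Real.toNNReal p) (Real.toNNReal_le_one.mpr hp)).toMeasure

instance (hp : p ≤ 1) : IsProbabilityMeasure (berM p hp) := PMF.toMeasure.isProbabilityMeasure _

lemma berM_true (hp : p ≤ 1) : berM p hp {true} = ENNReal.ofReal p := by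
  rw [berM, PMF.toMeasure_apply_singleton _ _ (measurableSet_singleton _), PMF.bernoulli_apply]
  rfl

lemma berM_false (hp0 : 0 ≤ p) (hp : p ≤ 1) : berM p hp {false} = ENNReal.ofReal (1 - p) := by
  rw [berM, PMF.toMeasure_apply_singleton _ _ (measurableSet_singleton _), PMF.bernoulli_apply]
  simp only [cond_false]
  rw [ENNReal.ofReal]
  congr 1
  ext
  rw [NNReal.coe_sub (Real.toNNReal_le_one.mpr hp), NNReal.coe_one, Real.coe_toNNReal _ hp0,
    Real.coe_toNNReal _ (by linarith)]

lemma bField_eq (hp : p ≤ 1) :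
    bernoulliField d r inst p hp = Measure.pi (fun _ : Fin d → ZMod r => berM p hp) := rfl

instance (hp : p ≤ 1) : IsProbabilityMeasure (bernoulliField d r inst p hp) := by
  rw [bField_eq]; infer_instance

lemma bField_pi (hp : p ≤ 1) (F : (Fin d → ZMod r) → Set Bool) :
    bernoulliField d r inst p hp (Set.univ.pi F) = ∏ v, berM p hp (F v) := by
  rw [bField_eq, Measure.pi_pi]

/-- Lower bound on the probability that at least `d` of the `2d` neighbors are on. -/
lemma q_lower (hr : 3 ≤ r) (hp0 : 0 ≤ p) (hp : p ≤ 1) (x : Fin d → ZMod r) :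
    ENNReal.ofReal ((4 * p * (1 - p))^d / (2 * d + 1)) ≤
      bernoulliField d r inst p hp
        {η | d ≤ Set.ncard {y | torusAdj d r x y ∧ η y = true}} := by
  classical
  set μ := bernoulliField d r inst p hp with hμ
  have hfin : {y | torusAdj d r x y}.Finite := Set.toFinite _
  set N : Finset (Fin d → ZMod r) := hfin.toFinset with hNdef
  have hNmem : ∀ y, y ∈ N ↔ torusAdj d r x y := fun y => hfin.mem_toFinset
  have hNcard : N.card = 2 * d := by
    rw [← Set.ncard_eq_toFinset_card _ hfin]; exact ncard_nbhd hr x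
  set cyl : Finset (Fin d → ZMod r) → Set ((Fin d → ZMod r) → Bool) :=
    fun T => Set.univ.pi fun v =>
      if v ∈ T then {true} else if v ∈ N then {false} else Set.univ with hcyl
  have hmeas : ∀ T ∈ N.powersetCard d, μ (cyl T) =
      ENNReal.ofReal p ^ d * ENNReal.ofReal (1 - p) ^ d := by
    intro T hT
    obtain ⟨hTN, hTcard⟩ := Finset.mem_powersetCard.mp hT
    rw [hcyl, hμ, bField_pi]
    have hg : ∀ v, berM p hp (if v ∈ T then {true} else if v ∈ N then {false} else Set.univ)
        = if v ∈ T then ENNReal.ofReal p else if v ∈ N then ENNReal.ofReal (1 - p) else 1 := by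
      intro v
      by_cases h1 : v ∈ T
      · simp [h1, berM_true]
      · by_cases h2 : v ∈ N
        · simp [h1, h2, berM_false hp0]
        · simp only [if_neg h1, if_neg h2]
          exact measure_univ
    simp only [hg]
    rw [Finset.prod_ite]
    have e1 : univ.filter (· ∈ T) = T := by ext v; simp
    have e2 : (univ.filter fun v => ¬ v ∈ T).filter (· ∈ N) = N \ T := by
      ext v; simp [Finset.mem_sdiff, and_comm]
    rw [Finset.prod_ite, Finset.prod_const, Finset.prod_const, Finset.prod_const_one, e1, e2,
      Finset.card_sdiff_of_subset hTN, hNcard, hTcard, mul_one]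
    have h2d : 2 * d - d = d := by omega
    rw [h2d]
  have hsub : ∀ T ∈ N.powersetCard d,
      cyl T ⊆ {η | d ≤ Set.ncard {y | torusAdj d r x y ∧ η y = true}} := by
    intro T hT η hη
    obtain ⟨hTN, hTcard⟩ := Finset.mem_powersetCard.mp hT
    have hsub2 : (T : Set (Fin d → ZMod r)) ⊆ {y | torusAdj d r x y ∧ η y = true} := by
      intro v hv
      have hvT : v ∈ T := hv
      refine ⟨(hNmem v).mp (hTN hvT), ?_⟩
      have h3 := (Set.mem_univ_pi.mp hη) v
      rw [if_pos hvT] at h3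
      exact h3
    calc d = T.card := hTcard.symm
      _ = (T : Set (Fin d → ZMod r)).ncard := (Set.ncard_coe_finset T).symm
      _ ≤ _ := Set.ncard_le_ncard hsub2 (Set.toFinite _)
  have hdisj : (↑(N.powersetCard d) : Set (Finset (Fin d → ZMod r))).PairwiseDisjoint cyl := by
    intro T hT T' hT' hne
    simp only [Finset.mem_coe, Finset.mem_powersetCard] at hT hT'
    have hns : ¬ T ⊆ T' := fun hss =>
      hne (Finset.eq_of_subset_of_card_le hss (by rw [hT.2, hT'.2]))
    obtain ⟨v, hvT, hvT'⟩ := Finset.not_subset.mp hns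
    refine Set.disjoint_left.mpr fun η h1 h2 => ?_
    have e1 := (Set.mem_univ_pi.mp h1) v
    have e2 := (Set.mem_univ_pi.mp h2) v
    rw [if_pos hvT] at e1
    rw [if_neg hvT', if_pos (hT.1 hvT)] at e2
    rw [Set.mem_singleton_iff] at e1 e2
    rw [e1] at e2
    exact Bool.noConfusion e2
  have hunion : μ (⋃ T ∈ N.powersetCard d, cyl T)
      = ((2*d).choose d : ℕ) * (ENNReal.ofReal p ^ d * ENNReal.ofReal (1 - p) ^ d) := by
    rw [measure_biUnion_finset hdisj (fun T _ => meas_all _)]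
    rw [Finset.sum_congr rfl hmeas, Finset.sum_const, Finset.card_powersetCard, hNcard,
      nsmul_eq_mul]
  have hchain : ENNReal.ofReal ((4 * p * (1 - p))^d / (2 * d + 1)) ≤
      μ (⋃ T ∈ N.powersetCard d, cyl T) := by
    rw [hunion]
    have h1p : (0:ℝ) ≤ 1 - p := by linarith
    rw [← ENNReal.ofReal_pow hp0, ← ENNReal.ofReal_pow h1p,
      ← ENNReal.ofReal_mul (pow_nonneg hp0 d), ← ENNReal.ofReal_natCast ((2*d).choose d),
      ← ENNReal.ofReal_mul (Nat.cast_nonneg _)]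
    apply ENNReal.ofReal_le_ofReal
    have hpos : (0:ℝ) < 2 * d + 1 := by positivity
    rw [div_le_iff₀ hpos]
    have h4 : ((4:ℝ))^d ≤ (2*d+1) * ((2*d).choose d : ℕ) := by
      have := Nat.four_pow_le_two_mul_add_one_mul_central_binom d
      have hcast : ((4^d : ℕ) : ℝ) ≤ (((2*d+1) * Nat.centralBinom d : ℕ) : ℝ) :=
        Nat.cast_le.mpr this
      rw [Nat.centralBinom] at hcast
      push_cast at hcast
      convert hcast using 2
    calc (4 * p * (1 - p))^d = 4^d * (p^d * (1-p)^d) := by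
          rw [mul_pow, mul_pow]; ring
      _ ≤ ((2*d+1) * ((2*d).choose d : ℕ)) * (p^d * (1-p)^d) :=
          mul_le_mul_of_nonneg_right h4 (mul_nonneg (pow_nonneg hp0 d) (pow_nonneg h1p d))
      _ = ((2*d).choose d : ℕ) * (p^d * (1-p)^d) * (2*d+1) := by ring
  exact hchain.trans (measure_mono (Set.iUnion₂_subset hsub))
end meas

section indep

lemma indepFun_fst_snd' {α β : Type*} [MeasurableSpace α] [MeasurableSpace β]
    (μ₁ : Measure α) (μ₂ : Measure β) [IsProbabilityMeasure μ₁] [IsProbabilityMeasure μ₂] :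
    IndepFun Prod.fst Prod.snd (μ₁.prod μ₂) := by
  rw [ProbabilityTheory.indepFun_iff_measure_inter_preimage_eq_mul]
  intro s t hs ht
  have h1 : (Prod.fst ⁻¹' s : Set (α × β)) = s ×ˢ Set.univ := (Set.prod_univ).symm
  have h2 : (Prod.snd ⁻¹' t : Set (α × β)) = Set.univ ×ˢ t := (Set.univ_prod).symm
  rw [h1, h2, Set.prod_inter_prod, Set.inter_univ, Set.univ_inter,
    Measure.prod_prod, Measure.prod_prod, Measure.prod_prod]
  simp [measure_univ]

lemma indepFun_comp_map {Ω Ω' : Type*} [MeasurableSpace Ω] [MeasurableSpace Ω']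
    {μ : Measure Ω} {e : Ω → Ω'} (he : Measurable e)
    (hall : ∀ u : Set Ω', MeasurableSet u)
    {F : Ω' → ℝ} {G : Ω' → ℝ} (h : IndepFun F G (μ.map e)) :
    IndepFun (F ∘ e) (G ∘ e) μ := by
  rw [ProbabilityTheory.indepFun_iff_measure_inter_preimage_eq_mul] at h ⊢
  intro s t hs ht
  have := h s t hs ht
  rw [Measure.map_apply he (hall _), Measure.map_apply he (hall _),
    Measure.map_apply he (hall _)] at this
  simpa [Set.preimage_comp, Set.preimage_inter] using this

variable {d r : ℕ} [inst : NeZero r] {p : ℝ}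

lemma indep_events (hp : p ≤ 1) {x y : Fin d → ZMod r}
    (hdisj : ∀ z, torusAdj d r x z → torusAdj d r y z → False) :
    IndepFun
      (Set.indicator {η : (Fin d → ZMod r) → Bool |
          d ≤ Set.ncard {z | torusAdj d r x z ∧ η z = true}} (fun _ => (1:ℝ)))
      (Set.indicator {η : (Fin d → ZMod r) → Bool |
          d ≤ Set.ncard {z | torusAdj d r y z ∧ η z = true}} (fun _ => (1:ℝ)))
      (bernoulliField d r inst p hp) := by
  classical
  set pr : (Fin d → ZMod r) → Prop := fun v => torusAdj d r x v with hpr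
  set e := MeasurableEquiv.piEquivPiSubtypeProd (fun _ : Fin d → ZMod r => Bool) pr with he
  set f : ({v // pr v} → Bool) → ℝ := fun ξ =>
    if d ≤ Set.ncard {z | torusAdj d r x z ∧ ∃ h : pr z, ξ ⟨z, h⟩ = true} then 1 else 0 with hf
  set g : ({v // ¬ pr v} → Bool) → ℝ := fun ξ =>
    if d ≤ Set.ncard {z | torusAdj d r y z ∧ ∃ h : ¬ pr z, ξ ⟨z, h⟩ = true} then 1 else 0 with hg
  have hfe : Set.indicator {η : (Fin d → ZMod r) → Bool |
      d ≤ Set.ncard {z | torusAdj d r x z ∧ η z = true}} (fun _ => (1:ℝ))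
      = (f ∘ Prod.fst) ∘ e := by
    funext η
    rw [Set.indicator_apply]
    have hset : {z | torusAdj d r x z ∧ ∃ h : pr z, ((e η).1 ⟨z, h⟩ : Bool) = true}
        = {z | torusAdj d r x z ∧ η z = true} := by
      ext z
      simp only [Set.mem_setOf_eq, and_congr_right_iff]
      intro hz
      constructor
      · rintro ⟨h, hh⟩; exact hh
      · intro hh; exact ⟨hz, hh⟩
    simp only [Function.comp_apply, hf, hset]
    by_cases hmem : d ≤ Set.ncard {z | torusAdj d r x z ∧ η z = true} <;>
      simp [hmem]
  have hge : Set.indicator {η : (Fin d → ZMod r) → Bool |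
      d ≤ Set.ncard {z | torusAdj d r y z ∧ η z = true}} (fun _ => (1:ℝ))
      = (g ∘ Prod.snd) ∘ e := by
    funext η
    rw [Set.indicator_apply]
    have hset : {z | torusAdj d r y z ∧ ∃ h : ¬ pr z, ((e η).2 ⟨z, h⟩ : Bool) = true}
        = {z | torusAdj d r y z ∧ η z = true} := by
      ext z
      simp only [Set.mem_setOf_eq, and_congr_right_iff]
      intro hz
      constructor
      · rintro ⟨h, hh⟩; exact hh
      · intro hh; exact ⟨fun hc => hdisj z hc hz, hh⟩
    simp only [Function.comp_apply, hg, hset]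
    by_cases hmem : d ≤ Set.ncard {z | torusAdj d r y z ∧ η z = true} <;>
      simp [hmem]
  have hμmap : (bernoulliField d r inst p hp).map e
      = (Measure.pi fun _ : {v // pr v} => berM p hp).prod
        (Measure.pi fun _ : {v // ¬ pr v} => berM p hp) := by
    rw [bField_eq]
    exact (measurePreserving_piEquivPiSubtypeProd (fun _ : Fin d → ZMod r => berM p hp) pr).map_eq
  have hind0 : IndepFun (f ∘ Prod.fst) (g ∘ Prod.snd) ((bernoulliField d r inst p hp).map e) := by
    rw [hμmap]
    exact (indepFun_fst_snd' _ _).comp (measurable_of_countable f) (measurable_of_countable g)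
  rw [hfe, hge]
  exact indepFun_comp_map e.measurable (fun u => u.toFinite.measurableSet) hind0

end indep

section cheb
variable {d r : ℕ} [inst : NeZero r] {p : ℝ}

lemma chernoff_step (hr : 3 ≤ r) (hd : 1 ≤ d) (hp0 : 0 < p) (hp1 : p < 1) (hp : p ≤ 1) {t : ℝ}
    (ht : 2 * t ≤ (r:ℝ)^d/((d*r:ℝ))^2 * ((4*p*(1-p))^d/(2*(d:ℝ)+1))) :
    bernoulliField d r inst p hp
      {η | (Set.ncard {x : Fin d → ZMod r |
          d ≤ Set.ncard {y | torusAdj d r x y ∧ η y = true}} : ℝ) < t}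
      ≤ ENNReal.ofReal (4 / ((r:ℝ)^d/((d*r:ℝ))^2 * ((4*p*(1-p))^d/(2*(d:ℝ)+1)))) := by
  classical
  have hr0 : (0:ℝ) < r := by exact_mod_cast (by omega : 0 < r)
  have hd0 : (0:ℝ) < d := by exact_mod_cast hd
  have h1p : (0:ℝ) < 1 - p := by linarith
  set μ := bernoulliField d r inst p hp with hμ
  set q : ℝ := (4*p*(1-p))^d/(2*(d:ℝ)+1) with hqdef
  have hqpos : 0 < q := by rw [hqdef]; positivity
  set Λ : ℝ := (r:ℝ)^d/((d*r:ℝ))^2 * q with hΛdef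
  have hΛpos : 0 < Λ := by rw [hΛdef]; positivity
  obtain ⟨S, hScode, hScard⟩ := exists_code (r := r) hd
  set A : (Fin d → ZMod r) → Set ((Fin d → ZMod r) → Bool) :=
    fun x => {η | d ≤ Set.ncard {y | torusAdj d r x y ∧ η y = true}} with hA
  set I : (Fin d → ZMod r) → ((Fin d → ZMod r) → Bool) → ℝ :=
    fun x => Set.indicator (A x) (fun _ => 1) with hIdef
  have hIml : ∀ x, MemLp (I x) 2 μ := fun x =>
    memLp_indicator_const 2 (meas_all _) 1 (Or.inr (measure_ne_top _ _))
  have hInt : ∀ x, ∫ η, I x η ∂μ = (μ (A x)).toReal := by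
    intro x
    rw [hIdef]
    rw [integral_indicator_const (1:ℝ) (meas_all _)]
    simp
    rfl
  set X : ((Fin d → ZMod r) → Bool) → ℝ := ∑ x ∈ S, I x with hXdef
  have hXml : MemLp X 2 μ := memLp_finset_sum' _ (fun i _ => hIml i)
  set m : ℝ := ∑ x ∈ S, (μ (A x)).toReal with hmdef
  have hEX : μ[X] = m := by
    rw [hXdef, hmdef]
    simp only [Finset.sum_apply]
    rw [integral_finset_sum S (fun x _ => (hIml x).integrable one_le_two)]
    exact Finset.sum_congr rfl fun x _ => hInt x
  have hq : ∀ x, q ≤ (μ (A x)).toReal := by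
    intro x
    have hql := q_lower (inst := inst) hr hp0.le hp x
    exact (ENNReal.ofReal_le_iff_le_toReal (measure_ne_top _ _)).mp hql
  have hmΛ : Λ ≤ m := by
    have hn : (r:ℝ)^d/((d*r:ℝ))^2 ≤ (S.card : ℝ) := by
      rw [div_le_iff₀ (by positivity)]
      exact_mod_cast hScard
    calc Λ ≤ (S.card : ℝ) * q := by
          rw [hΛdef]; exact mul_le_mul_of_nonneg_right hn hqpos.le
      _ ≤ ∑ x ∈ S, (μ (A x)).toReal := by
          calc (S.card : ℝ) * q = ∑ _x ∈ S, q := by rw [Finset.sum_const, nsmul_eq_mul]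
            _ ≤ _ := Finset.sum_le_sum fun x _ => hq x
      _ = m := hmdef.symm
  have hmpos : 0 < m := lt_of_lt_of_le hΛpos hmΛ
  have hVar : variance X μ ≤ m := by
    have hpair : (↑S : Set (Fin d → ZMod r)).Pairwise
        fun x y => IndepFun (I x) (I y) μ := by
      intro x hx y hy hxy
      refine indep_events hp fun z hxz hyz => ?_
      have h3 := hScode x (by exact_mod_cast hx) y (by exact_mod_cast hy) hxy
      have hxz1 := adj_hammingDist hxz
      have hyz1 := adj_hammingDist hyz
      have htri := hammingDist_triangle x z y
      rw [hammingDist_comm z y] at htri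
      omega
    rw [hXdef, IndepFun.variance_sum (fun i _ => hIml i) hpair, hmdef]
    refine Finset.sum_le_sum fun x _ => ?_
    rw [variance_eq_sub (hIml x)]
    have hsq : (I x) ^ 2 = I x := by
      funext a
      rw [Pi.pow_apply, hIdef]
      by_cases h : a ∈ A x <;> simp [Set.indicator_apply, h]
    rw [hsq, hInt]
    have := sq_nonneg ((μ (A x)).toReal)
    linarith
  have hsubE : {η | (Set.ncard {x : Fin d → ZMod r |
        d ≤ Set.ncard {y | torusAdj d r x y ∧ η y = true}} : ℝ) < t}
      ⊆ {η | m/2 ≤ |X η - μ[X]|} := by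
    intro η hη
    simp only [Set.mem_setOf_eq] at hη ⊢
    have hXle : X η ≤ (Set.ncard {x : Fin d → ZMod r |
        d ≤ Set.ncard {y | torusAdj d r x y ∧ η y = true}} : ℝ) := by
      have hXeq : X η = ((S.filter fun x => η ∈ A x).card : ℝ) := by
        rw [hXdef, Finset.sum_apply]
        have hterm : ∀ x ∈ S, I x η = if η ∈ A x then (1:ℝ) else 0 := fun x _ => by
          rw [hIdef]; exact Set.indicator_apply _ _ _
        rw [Finset.sum_congr rfl hterm, Finset.sum_boole]
      rw [hXeq]
      have hfin2 : {x : Fin d → ZMod r |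
          d ≤ Set.ncard {y | torusAdj d r x y ∧ η y = true}}.Finite := Set.toFinite _
      rw [Set.ncard_eq_toFinset_card _ hfin2]
      have : (S.filter fun x => η ∈ A x) ⊆ hfin2.toFinset := by
        intro x hx
        rw [Set.Finite.mem_toFinset]
        exact (Finset.mem_filter.mp hx).2
      exact_mod_cast Finset.card_le_card this
    have hXlt : X η < m/2 := by
      have : t ≤ Λ/2 := by linarith
      have : t ≤ m/2 := by linarith
      linarith
    rw [hEX]
    have : m/2 ≤ -(X η - m) := by linarith
    exact this.trans (neg_le_abs _)
  calc μ _ ≤ μ {η | m/2 ≤ |X η - μ[X]|} := measure_mono hsubE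
    _ ≤ ENNReal.ofReal (variance X μ / (m/2)^2) :=
        meas_ge_le_variance_div_sq hXml (by linarith)
    _ ≤ ENNReal.ofReal (4 / Λ) := by
        apply ENNReal.ofReal_le_ofReal
        calc variance X μ / (m/2)^2 ≤ m / (m/2)^2 :=
              (div_le_div_iff_of_pos_right (by positivity)).mpr hVar
          _ = 4 / m := by field_simp; ring
          _ ≤ 4 / Λ := by
              apply div_le_div_of_nonneg_left (by norm_num) hΛpos hmΛ
end cheb


/-- For `r ≥ 3` there is `ε_r ∈ (0, 1/2)` such that for every
`p ∈ (1/2 − ε_r, 1/2)`, with `C(p) = (log r − K(p))/2 > 0` where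
`K(p) = −log(4p(1−p))`, the number `|C₀^{d,p}|` of vertices of `T^d(r)` having at
least `d` of their neighbors in state 1 (states i.i.d. Bernoulli(p)) satisfies
`|C₀^{d,p}|/e^{C(p)d} → +∞` in probability as `d → ∞`. -/
theorem stmt_13 (r : ℕ) (hr : 3 ≤ r) :
    ∃ εr : ℝ, 0 < εr ∧ εr < 1/2 ∧
      ∀ p : ℝ, ∀ _hp₁ : 1/2 - εr < p, ∀ _hp₂ : p < 1/2,
        0 < (Real.log r - (-Real.log (4 * p * (1 - p)))) / 2 ∧
        ∀ M : ℝ, 0 < M →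
          Filter.Tendsto (fun d : ℕ =>
              bernoulliField d r ⟨by omega⟩ p (by linarith)
                {η | (Set.ncard {x : Fin d → ZMod r |
                        d ≤ Set.ncard {y | torusAdj d r x y ∧ η y = true}} : ℝ)
                      / Real.exp
                          ((Real.log r - (-Real.log (4 * p * (1 - p)))) / 2 * d)
                    < M})
            Filter.atTop (nhds 0) := by
  haveI inst : NeZero r := ⟨by omega⟩
  refine ⟨1/4, by norm_num, by norm_num, ?_⟩
  intro p hp₁ hp₂
  have hp0 : 0 < p := by linarith
  have hp1 : p < 1 := by linarith
  have hple : p ≤ 1 := by linarith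
  have hr0 : (0:ℝ) < r := by exact_mod_cast (by omega : 0 < r)
  have hr3 : (3:ℝ) ≤ r := by exact_mod_cast hr
  set a : ℝ := 4 * p * (1 - p) with ha
  have ha34 : 3/4 < a := by nlinarith
  have ha0 : 0 < a := by rw [ha]; nlinarith
  set C : ℝ := (Real.log r - (-Real.log a)) / 2 with hC
  have hlogsum : 0 < Real.log r + Real.log a := by
    have h2 : Real.log 3 ≤ Real.log r := Real.log_le_log (by norm_num) hr3
    have h3 : Real.log (3/4) < Real.log a := Real.log_lt_log (by norm_num) ha34
    have h4 : (0:ℝ) < Real.log 3 + Real.log (3/4) := by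
      rw [← Real.log_mul (by norm_num) (by norm_num)]
      apply Real.log_pos; norm_num
    linarith
  have hCpos : 0 < C := by rw [hC]; linarith
  refine ⟨hCpos, ?_⟩
  intro M hM
  -- exp(Cd)^2 = (r*a)^d
  have hexp2 : ∀ d : ℕ, Real.exp (C * d) ^ 2 = ((r:ℝ) * a) ^ d := by
    intro d
    have h2C : Real.log ((r:ℝ) * a) = 2 * C := by
      rw [Real.log_mul hr0.ne' ha0.ne', hC]; ring
    have e1 : Real.exp (C * d) = Real.exp C ^ d := by rw [mul_comm, Real.exp_nat_mul]
    have e2 : Real.exp (2*C) = ((r:ℝ)*a) := by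
      rw [← h2C, Real.exp_log (mul_pos hr0 ha0)]
    calc Real.exp (C*d)^2 = (Real.exp C ^ d)^2 := by rw [e1]
      _ = ((Real.exp C)^2)^d := by rw [← pow_mul, ← pow_mul, mul_comm]
      _ = (Real.exp (2*C))^d := by
          congr 1
          rw [show (2:ℝ)*C = ((2:ℕ):ℝ)*C by norm_num, Real.exp_nat_mul]
      _ = ((r:ℝ)*a)^d := by rw [e2]
  -- Λ d
  set Λ : ℕ → ℝ := fun d => (r:ℝ)^d/(((d:ℝ)*r))^2 * (a^d/(2*(d:ℝ)+1)) with hΛ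
  have hΛeq : ∀ d : ℕ, 1 ≤ d → Λ d = Real.exp (C * d)^2 / (((d:ℝ)*r)^2*(2*(d:ℝ)+1)) := by
    intro d hd
    have hd0 : (0:ℝ) < d := by exact_mod_cast hd
    rw [hΛ, hexp2, mul_pow]
    field_simp
  set B : ℕ → ℝ := fun d => Real.exp (C * d) / (d:ℝ)^3 with hB
  have hBtends : Filter.Tendsto B Filter.atTop Filter.atTop := by
    have h1 := Real.tendsto_exp_div_pow_atTop 3
    have h2 : Filter.Tendsto (fun n : ℕ => C * (n:ℝ)) Filter.atTop Filter.atTop :=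
      Filter.Tendsto.const_mul_atTop hCpos tendsto_natCast_atTop_atTop
    have h3 := h1.comp h2
    have h4 : Filter.Tendsto (fun n : ℕ => C^3 * (Real.exp (C*(n:ℝ))/(C*(n:ℝ))^3))
        Filter.atTop Filter.atTop := h3.const_mul_atTop (by positivity)
    refine h4.congr' ?_
    filter_upwards [Filter.eventually_ge_atTop 1] with n hn
    have hn0 : (0:ℝ) < n := by exact_mod_cast hn
    rw [hB]
    field_simp
  -- eventual bound
  have hbound : ∀ᶠ d : ℕ in Filter.atTop,
      bernoulliField d r inst p hple
        {η | (Set.ncard {x : Fin d → ZMod r |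
            d ≤ Set.ncard {y | torusAdj d r x y ∧ η y = true}} : ℝ)
            / Real.exp (C * d) < M}
        ≤ ENNReal.ofReal (4 / Λ d) := by
    filter_upwards [Filter.eventually_ge_atTop 1, hBtends.eventually_ge_atTop (6*M*(r:ℝ)^2)]
      with d hd hBd
    have hd0 : (0:ℝ) < d := by exact_mod_cast hd
    have hd1 : (1:ℝ) ≤ d := by exact_mod_cast hd
    have hden : ((d:ℝ)*r)^2*(2*(d:ℝ)+1) ≤ 3*(r:ℝ)^2*(d:ℝ)^3 := by
      nlinarith [mul_nonneg (mul_nonneg (sq_nonneg (r:ℝ)) (sq_nonneg (d:ℝ)))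
        (sub_nonneg.mpr hd1)]
    have hdenpos : (0:ℝ) < ((d:ℝ)*r)^2*(2*(d:ℝ)+1) := by positivity
    have hexppos := Real.exp_pos (C * d)
    have ht : 2 * (M * Real.exp (C * d)) ≤ Λ d := by
      rw [hΛeq d hd]
      rw [le_div_iff₀ hdenpos]
      have key : 6*M*(r:ℝ)^2*(d:ℝ)^3 ≤ Real.exp (C*d) := by
        have hBd' : 6*M*(r:ℝ)^2 ≤ Real.exp (C*d) / (d:ℝ)^3 := hBd
        rw [le_div_iff₀ (by positivity)] at hBd'
        linarith
      calc 2 * (M * Real.exp (C*d)) * (((d:ℝ)*r)^2*(2*(d:ℝ)+1))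
          ≤ 2 * (M * Real.exp (C*d)) * (3*(r:ℝ)^2*(d:ℝ)^3) := by
            apply mul_le_mul_of_nonneg_left hden
            positivity
        _ = (6*M*(r:ℝ)^2*(d:ℝ)^3) * Real.exp (C*d) := by ring
        _ ≤ Real.exp (C*d) * Real.exp (C*d) := by
            apply mul_le_mul_of_nonneg_right key hexppos.le
        _ = Real.exp (C*d)^2 := by ring
    have hsetrw : {η : (Fin d → ZMod r) → Bool | (Set.ncard {x : Fin d → ZMod r |
            d ≤ Set.ncard {y | torusAdj d r x y ∧ η y = true}} : ℝ)
            / Real.exp (C * d) < M}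
        = {η : (Fin d → ZMod r) → Bool | (Set.ncard {x : Fin d → ZMod r |
            d ≤ Set.ncard {y | torusAdj d r x y ∧ η y = true}} : ℝ) < M * Real.exp (C * d)} := by
      ext η
      rw [Set.mem_setOf_eq, Set.mem_setOf_eq, div_lt_iff₀ (Real.exp_pos _)]
    rw [hsetrw]
    exact chernoff_step hr hd hp0 hp1 hple ht
  -- Λ → ∞
  have hΛtends : Filter.Tendsto Λ Filter.atTop Filter.atTop := by
    apply Filter.tendsto_atTop_mono' Filter.atTop
        (by
          filter_upwards [Filter.eventually_ge_atTop 1] with d hd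
          have hd0 : (0:ℝ) < d := by exact_mod_cast hd
          show B d / (3*(r:ℝ)^2) ≤ Λ d
          rw [hΛeq d hd, hB]
          have hd1 : (1:ℝ) ≤ d := by exact_mod_cast hd
          have hone : (1:ℝ) ≤ Real.exp (C*d) := Real.one_le_exp (by positivity)
          have hden : ((d:ℝ)*r)^2*(2*(d:ℝ)+1) ≤ 3*(r:ℝ)^2*(d:ℝ)^3 := by
            nlinarith [mul_nonneg (mul_nonneg (sq_nonneg (r:ℝ)) (sq_nonneg (d:ℝ)))
              (sub_nonneg.mpr hd1)]
          have hdenpos : (0:ℝ) < ((d:ℝ)*r)^2*(2*(d:ℝ)+1) := by positivity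
          rw [div_le_div_iff₀ (by positivity) hdenpos]
          calc Real.exp (C*d) / (d:ℝ)^3 * (((d:ℝ)*r)^2*(2*(d:ℝ)+1))
              ≤ Real.exp (C*d) / (d:ℝ)^3 * (3*(r:ℝ)^2*(d:ℝ)^3) := by
                apply mul_le_mul_of_nonneg_left hden; positivity
            _ = Real.exp (C*d) * (3*(r:ℝ)^2) := by field_simp
            _ ≤ Real.exp (C*d)^2 * (3*(r:ℝ)^2) := by
                nlinarith [mul_nonneg (mul_nonneg (Real.exp_pos (C*(d:ℝ))).le
                  (sub_nonneg.mpr hone)) (by positivity : (0:ℝ) ≤ 3*(r:ℝ)^2)]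
          )
    exact (hBtends.atTop_div_const (by positivity))
  have hofReal : Filter.Tendsto (fun d => ENNReal.ofReal (4 / Λ d)) Filter.atTop (nhds 0) := by
    have h4Λ : Filter.Tendsto (fun d => 4 / Λ d) Filter.atTop (nhds 0) :=
      Filter.Tendsto.div_atTop tendsto_const_nhds hΛtends
    simpa using ENNReal.tendsto_ofReal h4Λ
  refine tendsto_of_tendsto_of_tendsto_of_le_of_le' tendsto_const_nhds hofReal
    (Filter.Eventually.of_forall fun d => zero_le) hbound
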